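/- Column (feature) update monotonicity: let C_W' : W → W* be any clustering function such that for every w ∈ W, D(p(·|w) ‖ p̂(·|C_W' w)) ≤ D(p(·|w) ‖ p̂(·|C_W w)), where p̂ is computed from the current pair (C_X, C_W); in particular this holds for the pointwise update C_W'(w) = argmin_{w* ∈ W*} D(p(·|w) ‖ p̂(·|w*)). Then the objective does not increase: ℓ_A(C_X, C_W') ≤ ℓ_A(C_X, C_W). -/

import Mathlib

open scoped BigOperators

noncomputable section

/-- Kullback–Leibler divergence `D(g‖h)` between nonnegative functions on a finite type,
`D(g‖h) = ∑_{t : g t > 0} g t * log (g t / h t)`, with the convention `D(g‖h) = ⊤`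
whenever `g t > 0 = h t` for some `t`. -/
def KLdiv {T : Type*} [Fintype T] (g h : T → ℝ) : EReal :=
  if ∃ t, 0 < g t ∧ h t = 0 then ⊤
  else ((∑ t ∈ Finset.univ.filter (fun t => 0 < g t),
      g t * Real.log (g t / h t) : ℝ) : EReal)

/-- Row marginal `p₁(x) = ∑_w p(x,w)`. -/
def marg₁ {A B : Type*} [Fintype B] (p : A × B → ℝ) (x : A) : ℝ := ∑ w, p (x, w)

/-- Column marginal `p₂(w) = ∑_x p(x,w)`. -/
def marg₂ {A B : Type*} [Fintype A] (p : A × B → ℝ) (w : B) : ℝ := ∑ x, p (x, w)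

/-- Co-clustered distribution `p*(x*,w*) = ∑_{x : C_X x = x*} ∑_{w : C_W w = w*} p(x,w)`. -/
def coclust {A B As Bs : Type*} [Fintype A] [Fintype B] [DecidableEq As] [DecidableEq Bs]
    (p : A × B → ℝ) (CX : A → As) (CW : B → Bs) : As × Bs → ℝ :=
  fun c => ∑ x ∈ Finset.univ.filter (fun x => CX x = c.1),
             ∑ w ∈ Finset.univ.filter (fun w => CW w = c.2), p (x, w)

/-- Approximating distribution
`p̂(x,w) = p*(C_X x, C_W w) · p₁(x) · p₂(w) / (p₁*(C_X x) · p₂*(C_W w))`. -/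
def approx {A B As Bs : Type*} [Fintype A] [Fintype B] [Fintype As] [Fintype Bs]
    [DecidableEq As] [DecidableEq Bs]
    (p : A × B → ℝ) (CX : A → As) (CW : B → Bs) : A × B → ℝ :=
  fun c =>
    coclust p CX CW (CX c.1, CW c.2) * marg₁ p c.1 * marg₂ p c.2 /
      (marg₁ (coclust p CX CW) (CX c.1) * marg₂ (coclust p CX CW) (CW c.2))

/-- Conditional distribution `p(w|x) = p(x,w)/p₁(x)` on `B`. -/
def condRow {A B : Type*} [Fintype B] (p : A × B → ℝ) (x : A) : B → ℝ :=
  fun w => p (x, w) / marg₁ p x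

/-- Conditional distribution `p(x|w) = p(x,w)/p₂(w)` on `A`. -/
def condCol {A B : Type*} [Fintype A] (p : A × B → ℝ) (w : B) : A → ℝ :=
  fun x => p (x, w) / marg₂ p w

/-- Conditional approximating distribution
`p̂(w|x*) = p*(x*, C_W w) · p₂(w) / (p₁*(x*) · p₂*(C_W w))` on `B`. -/
def approxCondRow {A B As Bs : Type*} [Fintype A] [Fintype B] [Fintype As] [Fintype Bs]
    [DecidableEq As] [DecidableEq Bs]
    (p : A × B → ℝ) (CX : A → As) (CW : B → Bs) (xs : As) : B → ℝ :=
  fun w =>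
    coclust p CX CW (xs, CW w) * marg₂ p w /
      (marg₁ (coclust p CX CW) xs * marg₂ (coclust p CX CW) (CW w))

/-- Conditional approximating distribution
`p̂(x|w*) = p*(C_X x, w*) · p₁(x) / (p₂*(w*) · p₁*(C_X x))` on `A`. -/
def approxCondCol {A B As Bs : Type*} [Fintype A] [Fintype B] [Fintype As] [Fintype Bs]
    [DecidableEq As] [DecidableEq Bs]
    (p : A × B → ℝ) (CX : A → As) (CW : B → Bs) (ws : Bs) : A → ℝ :=
  fun x =>
    coclust p CX CW (CX x, ws) * marg₁ p x /
      (marg₂ (coclust p CX CW) ws * marg₁ (coclust p CX CW) (CX x))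

/-- Mutual information `I(p) = ∑_{x,w} p(x,w) · log (p(x,w)/(p₁(x)·p₂(w)))`
(summing over all pairs; used for the strictly positive original distribution). -/
def mutualInfoFull {A B : Type*} [Fintype A] [Fintype B] (p : A × B → ℝ) : ℝ :=
  ∑ x, ∑ w, p (x, w) * Real.log (p (x, w) / (marg₁ p x * marg₂ p w))

/-- Mutual information `I(p*) = ∑_{(x*,w*) : p*(x*,w*) > 0} p*(x*,w*) ·
log (p*(x*,w*)/(p₁*(x*)·p₂*(w*)))` (summing only over positive entries). -/
def mutualInfoPos {A B : Type*} [Fintype A] [Fintype B] (p : A × B → ℝ) : ℝ :=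
  ∑ c ∈ Finset.univ.filter (fun c : A × B => 0 < p c),
    p c * Real.log (p c / (marg₁ p c.1 * marg₂ p c.2))

/-- The co-clustering objective `ℓ_A(C_X, C_W) = I(p) − I(p*)`. -/
def lossA {A B As Bs : Type*} [Fintype A] [Fintype B] [Fintype As] [Fintype Bs]
    [DecidableEq As] [DecidableEq Bs]
    (p : A × B → ℝ) (CX : A → As) (CW : B → Bs) : ℝ :=
  mutualInfoFull p - mutualInfoPos (coclust p CX CW)

/-- The elastic coupled co-clustering objective
`ℓ_T(C_Y, C_Z) = I(q) − I(q*) + α·D(q₁*‖π) + β·D(q₂*‖ρ)`. -/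
def lossT {A B As Bs : Type*} [Fintype A] [Fintype B] [Fintype As] [Fintype Bs]
    [DecidableEq As] [DecidableEq Bs]
    (q : A × B → ℝ) (CY : A → As) (CZ : B → Bs) (π : As → ℝ) (ρ : Bs → ℝ)
    (α β : ℝ) : EReal :=
  ((mutualInfoFull q - mutualInfoPos (coclust q CY CZ) : ℝ) : EReal)
    + (α : EReal) * KLdiv (marg₁ (coclust q CY CZ)) π
    + (β : EReal) * KLdiv (marg₂ (coclust q CY CZ)) ρ

end

open Finset in
private lemma my_gibbs {ι : Type*} [Fintype ι] (a b : ι → ℝ) (ha0 : ∀ i, 0 ≤ a i)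
    (hb0 : ∀ i, 0 ≤ b i) (ha1 : ∑ i, a i = 1) (hb1 : ∑ i, b i ≤ 1)
    (hab : ∀ i, 0 < a i → 0 < b i) :
    0 ≤ ∑ i, a i * Real.log (a i / b i) := by
  have key : ∑ i, a i * Real.log (b i / a i) ≤ ∑ i, (b i - a i) := by
    apply Finset.sum_le_sum
    intro i _
    rcases (ha0 i).lt_or_eq with hai | hai
    · have hbi := hab i hai
      have hlog := Real.log_le_sub_one_of_pos (div_pos hbi hai)
      calc a i * Real.log (b i / a i) ≤ a i * (b i / a i - 1) :=
            mul_le_mul_of_nonneg_left hlog hai.le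
        _ = b i - a i := by field_simp
    · rw [← hai]; simpa using hb0 i
  have h2 : ∑ i, (b i - a i) ≤ 0 := by
    rw [Finset.sum_sub_distrib, ha1]; linarith
  have h3 : ∑ i, a i * Real.log (a i / b i) = ∑ i, -(a i * Real.log (b i / a i)) := by
    refine Finset.sum_congr rfl fun i _ => ?_
    have : Real.log (a i / b i) = - Real.log (b i / a i) := by
      rw [← Real.log_inv, inv_div]
    rw [this]; ring
  rw [h3, Finset.sum_neg_distrib]
  linarith

private lemma my_sum_filter_pos {ι : Type*} [Fintype ι] (f g : ι → ℝ) (hf : ∀ i, 0 ≤ f i) :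
    ∑ i ∈ Finset.univ.filter (fun i => 0 < f i), f i * g i = ∑ i, f i * g i :=
  Finset.sum_filter_of_ne (fun i _ h => by
    rcases (hf i).lt_or_eq with h' | h'
    · exact h'
    · exact absurd (by rw [← h', zero_mul]) h)

private lemma my_KLdiv_of_pos {T : Type*} [Fintype T] (g h : T → ℝ)
    (hg : ∀ t, 0 < g t) (hh : ∀ t, 0 < h t) :
    KLdiv g h = ((∑ t, g t * Real.log (g t / h t) : ℝ) : EReal) := by
  rw [KLdiv, if_neg (by push_neg; intro t _; exact (hh t).ne')]
  have : Finset.univ.filter (fun t => 0 < g t) = Finset.univ :=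
    Finset.filter_true_of_mem fun t _ => hg t
  rw [this]

set_option linter.unusedSectionVars false
set_option linter.unusedVariables false
section helperlemmas
variable {X W Xs Ws : Type*} [Fintype X] [Fintype W]
    [Fintype Xs] [Fintype Ws] [DecidableEq Xs] [DecidableEq Ws]

private lemma my_marg₁_pos [Nonempty W] (p : X × W → ℝ) (hpos : ∀ c, 0 < p c) (x : X) :
    0 < marg₁ p x :=
  Finset.sum_pos (fun w _ => hpos _) Finset.univ_nonempty

private lemma my_marg₂_pos [Nonempty X] (p : X × W → ℝ) (hpos : ∀ c, 0 < p c) (w : W) :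
    0 < marg₂ p w :=
  Finset.sum_pos (fun x _ => hpos _) Finset.univ_nonempty

private lemma my_coclust_nonneg (p : X × W → ℝ) (hpos : ∀ c, 0 < p c)
    (CX : X → Xs) (C : W → Ws) (c : Xs × Ws) : 0 ≤ coclust p CX C c :=
  Finset.sum_nonneg fun _ _ => Finset.sum_nonneg fun _ _ => (hpos _).le

private lemma my_coclust_apply_pos (p : X × W → ℝ) (hpos : ∀ c, 0 < p c)
    (CX : X → Xs) (C : W → Ws) (x : X) (w : W) :
    0 < coclust p CX C (CX x, C w) :=
  Finset.sum_pos' (fun _ _ => Finset.sum_nonneg fun _ _ => (hpos _).le)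
    ⟨x, by simp, Finset.sum_pos' (fun _ _ => (hpos _).le) ⟨w, by simp, hpos _⟩⟩

private lemma my_marg₁_coclust_eq (p : X × W → ℝ) (CX : X → Xs) (C : W → Ws) (xs : Xs) :
    marg₁ (coclust p CX C) xs
      = ∑ x ∈ Finset.univ.filter (fun x => CX x = xs), marg₁ p x := by
  calc marg₁ (coclust p CX C) xs
      = ∑ ws, ∑ x ∈ Finset.univ.filter (fun x => CX x = xs),
          ∑ w ∈ Finset.univ.filter (fun w => C w = ws), p (x, w) := rfl
    _ = ∑ x ∈ Finset.univ.filter (fun x => CX x = xs), ∑ ws,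
          ∑ w ∈ Finset.univ.filter (fun w => C w = ws), p (x, w) := Finset.sum_comm
    _ = ∑ x ∈ Finset.univ.filter (fun x => CX x = xs), ∑ w, p (x, w) :=
        Finset.sum_congr rfl fun x _ => Finset.sum_fiberwise Finset.univ C (fun w => p (x, w))

private lemma my_marg₂_coclust_eq (p : X × W → ℝ) (CX : X → Xs) (C : W → Ws) (ws : Ws) :
    marg₂ (coclust p CX C) ws
      = ∑ w ∈ Finset.univ.filter (fun w => C w = ws), marg₂ p w := by
  calc marg₂ (coclust p CX C) ws
      = ∑ xs, ∑ x ∈ Finset.univ.filter (fun x => CX x = xs),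
          ∑ w ∈ Finset.univ.filter (fun w => C w = ws), p (x, w) := rfl
    _ = ∑ xs, ∑ w ∈ Finset.univ.filter (fun w => C w = ws),
          ∑ x ∈ Finset.univ.filter (fun x => CX x = xs), p (x, w) :=
        Finset.sum_congr rfl fun xs _ => Finset.sum_comm
    _ = ∑ w ∈ Finset.univ.filter (fun w => C w = ws), ∑ xs,
          ∑ x ∈ Finset.univ.filter (fun x => CX x = xs), p (x, w) := Finset.sum_comm
    _ = ∑ w ∈ Finset.univ.filter (fun w => C w = ws), ∑ x, p (x, w) :=
        Finset.sum_congr rfl fun w _ => Finset.sum_fiberwise Finset.univ CX (fun x => p (x, w))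

private lemma my_marg₁_coclust_nonneg (p : X × W → ℝ) (hpos : ∀ c, 0 < p c)
    (CX : X → Xs) (C : W → Ws) (xs : Xs) : 0 ≤ marg₁ (coclust p CX C) xs :=
  Finset.sum_nonneg fun _ _ => my_coclust_nonneg p hpos CX C _

private lemma my_marg₂_coclust_nonneg (p : X × W → ℝ) (hpos : ∀ c, 0 < p c)
    (CX : X → Xs) (C : W → Ws) (ws : Ws) : 0 ≤ marg₂ (coclust p CX C) ws :=
  Finset.sum_nonneg fun _ _ => my_coclust_nonneg p hpos CX C _

private lemma my_marg₁_coclust_pos [Nonempty W] (p : X × W → ℝ) (hpos : ∀ c, 0 < p c)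
    (CX : X → Xs) (C : W → Ws) (x : X) : 0 < marg₁ (coclust p CX C) (CX x) := by
  rw [my_marg₁_coclust_eq]
  exact Finset.sum_pos (fun x' _ => my_marg₁_pos p hpos x') ⟨x, by simp⟩

private lemma my_marg₂_coclust_pos [Nonempty X] (p : X × W → ℝ) (hpos : ∀ c, 0 < p c)
    (CX : X → Xs) (C : W → Ws) (w : W) : 0 < marg₂ (coclust p CX C) (C w) := by
  rw [my_marg₂_coclust_eq]
  exact Finset.sum_pos (fun w' _ => my_marg₂_pos p hpos w') ⟨w, by simp⟩

private lemma my_group_sum (p : X × W → ℝ) (CX : X → Xs) (C : W → Ws) (f : Xs × Ws → ℝ) :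
    ∑ x, ∑ w, p (x, w) * f (CX x, C w) = ∑ c, coclust p CX C c * f c := by
  rw [Fintype.sum_prod_type]
  symm
  calc ∑ xs, ∑ ws, coclust p CX C (xs, ws) * f (xs, ws)
      = ∑ xs, ∑ ws, ∑ x ∈ Finset.univ.filter (fun x => CX x = xs),
          ∑ w ∈ Finset.univ.filter (fun w => C w = ws), p (x, w) * f (CX x, C w) := by
        refine Finset.sum_congr rfl fun xs _ => Finset.sum_congr rfl fun ws _ => ?_
        rw [coclust, Finset.sum_mul]
        refine Finset.sum_congr rfl fun x hx => ?_
        rw [Finset.sum_mul]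
        refine Finset.sum_congr rfl fun w hw => ?_
        simp only [Finset.mem_filter] at hx hw
        rw [hx.2, hw.2]
    _ = ∑ xs, ∑ x ∈ Finset.univ.filter (fun x => CX x = xs), ∑ ws,
          ∑ w ∈ Finset.univ.filter (fun w => C w = ws), p (x, w) * f (CX x, C w) := by
        exact Finset.sum_congr rfl fun xs _ => Finset.sum_comm
    _ = ∑ xs, ∑ x ∈ Finset.univ.filter (fun x => CX x = xs),
          ∑ w, p (x, w) * f (CX x, C w) := by
        exact Finset.sum_congr rfl fun xs _ => Finset.sum_congr rfl fun x _ =>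
          Finset.sum_fiberwise _ _ _
    _ = ∑ x, ∑ w, p (x, w) * f (CX x, C w) := Finset.sum_fiberwise _ _ _

end helperlemmas

section helperlemmas2
variable {X W Xs Ws : Type*} [Fintype X] [Fintype W]
    [Fintype Xs] [Fintype Ws] [DecidableEq Xs] [DecidableEq Ws]

private lemma my_approxCondCol_nonneg [Nonempty W] (p : X × W → ℝ) (hpos : ∀ c, 0 < p c)
    (CX : X → Xs) (CW : W → Ws) (ws : Ws) (x : X) :
    0 ≤ approxCondCol p CX CW ws x :=
  div_nonneg (mul_nonneg (my_coclust_nonneg p hpos CX CW _) (my_marg₁_pos p hpos x).le)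
    (mul_nonneg (my_marg₂_coclust_nonneg p hpos CX CW _) (my_marg₁_coclust_nonneg p hpos CX CW _))

private lemma my_approx_pos_components [Nonempty W] (p : X × W → ℝ) (hpos : ∀ c, 0 < p c)
    (CX : X → Xs) (CW : W → Ws) (ws : Ws) (x : X)
    (h : 0 < approxCondCol p CX CW ws x) :
    0 < coclust p CX CW (CX x, ws) ∧ 0 < marg₁ (coclust p CX CW) (CX x)
      ∧ 0 < marg₂ (coclust p CX CW) ws := by
  have hm1 := my_marg₁_pos p hpos x
  have hM1 := my_marg₁_coclust_nonneg p hpos CX CW (CX x)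
  have hM2 := my_marg₂_coclust_nonneg p hpos CX CW ws
  have hP0 := my_coclust_nonneg p hpos CX CW (CX x, ws)
  rw [approxCondCol] at h
  rcases div_pos_iff.mp h with ⟨hnum, hden⟩ | ⟨_, hden⟩
  · rcases mul_pos_iff.mp hden with ⟨h2a, h2b⟩ | ⟨h2a, _⟩
    · rcases mul_pos_iff.mp hnum with ⟨h3a, _⟩ | ⟨_, h3b⟩
      · exact ⟨h3a, h2b, h2a⟩
      · exact absurd h3b (not_lt.mpr hm1.le)
    · exact absurd h2a (not_lt.mpr hM2)
  · exact absurd hden (not_lt.mpr (mul_nonneg hM2 hM1))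

private lemma my_sum_weighted_KL [Nonempty X] [Nonempty W]
    (p : X × W → ℝ) (hpos : ∀ c, 0 < p c) (CX : X → Xs) (CW : W → Ws) (C : W → Ws)
    (hC : ∀ w x, 0 < approxCondCol p CX CW (C w) x) :
    ∑ w, marg₂ p w * ∑ x, condCol p w x *
        Real.log (condCol p w x / approxCondCol p CX CW (C w) x)
      = mutualInfoFull p - ∑ c, coclust p CX C c *
          Real.log (coclust p CX CW c /
            (marg₁ (coclust p CX CW) c.1 * marg₂ (coclust p CX CW) c.2)) := by
  have hm1 : ∀ x, 0 < marg₁ p x := my_marg₁_pos p hpos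
  have hm2 : ∀ w, 0 < marg₂ p w := my_marg₂_pos p hpos
  have step1 : ∀ w, marg₂ p w * ∑ x, condCol p w x *
      Real.log (condCol p w x / approxCondCol p CX CW (C w) x)
      = ∑ x, p (x, w) * Real.log (condCol p w x / approxCondCol p CX CW (C w) x) := by
    intro w
    rw [Finset.mul_sum]
    refine Finset.sum_congr rfl fun x _ => ?_
    generalize Real.log (condCol p w x / approxCondCol p CX CW (C w) x) = L
    show marg₂ p w * (p (x, w) / marg₂ p w * L) = p (x, w) * L
    field_simp
    rw [mul_assoc]
    exact mul_div_cancel_left₀ _ (hm2 w).ne'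
  have step3 : ∀ x w, p (x, w) * Real.log (condCol p w x / approxCondCol p CX CW (C w) x)
      = p (x, w) * Real.log (p (x, w) / (marg₁ p x * marg₂ p w))
        - p (x, w) * Real.log (coclust p CX CW (CX x, C w) /
            (marg₁ (coclust p CX CW) (CX x) * marg₂ (coclust p CX CW) (C w))) := by
    intro x w
    obtain ⟨hP, hM1, hM2⟩ := my_approx_pos_components p hpos CX CW (C w) x (hC w x)
    have hr : condCol p w x / approxCondCol p CX CW (C w) x
        = (p (x, w) / (marg₁ p x * marg₂ p w)) /
          (coclust p CX CW (CX x, C w) /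
            (marg₁ (coclust p CX CW) (CX x) * marg₂ (coclust p CX CW) (C w))) := by
      simp only [condCol, approxCondCol]
      field_simp
    rw [hr, Real.log_div
      (div_pos (hpos _) (mul_pos (hm1 x) (hm2 w))).ne'
      (div_pos hP (mul_pos hM1 hM2)).ne']
    ring
  calc ∑ w, marg₂ p w * ∑ x, condCol p w x *
        Real.log (condCol p w x / approxCondCol p CX CW (C w) x)
      = ∑ w, ∑ x, p (x, w) * Real.log (condCol p w x / approxCondCol p CX CW (C w) x) :=
        Finset.sum_congr rfl fun w _ => step1 w
    _ = ∑ x, ∑ w, p (x, w) * Real.log (condCol p w x / approxCondCol p CX CW (C w) x) :=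
        Finset.sum_comm
    _ = ∑ x, ∑ w, (p (x, w) * Real.log (p (x, w) / (marg₁ p x * marg₂ p w))
          - p (x, w) * Real.log (coclust p CX CW (CX x, C w) /
              (marg₁ (coclust p CX CW) (CX x) * marg₂ (coclust p CX CW) (C w)))) :=
        Finset.sum_congr rfl fun x _ => Finset.sum_congr rfl fun w _ => step3 x w
    _ = (∑ x, ∑ w, p (x, w) * Real.log (p (x, w) / (marg₁ p x * marg₂ p w)))
          - ∑ x, ∑ w, p (x, w) * Real.log (coclust p CX CW (CX x, C w) /
              (marg₁ (coclust p CX CW) (CX x) * marg₂ (coclust p CX CW) (C w))) := by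
        simp only [Finset.sum_sub_distrib]
    _ = mutualInfoFull p - ∑ c, coclust p CX C c *
          Real.log (coclust p CX CW c /
            (marg₁ (coclust p CX CW) c.1 * marg₂ (coclust p CX CW) c.2)) := by
        rw [my_group_sum p CX C (fun c => Real.log (coclust p CX CW c /
            (marg₁ (coclust p CX CW) c.1 * marg₂ (coclust p CX CW) c.2)))]
        rfl

private lemma my_T_le [Nonempty X] [Nonempty W] (p : X × W → ℝ) (hpos : ∀ c, 0 < p c)
    (CX : X → Xs) (CW CW' : W → Ws)
    (hQP : ∀ c, 0 < coclust p CX CW' c → 0 < coclust p CX CW c) :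
    ∑ c, coclust p CX CW' c * Real.log (coclust p CX CW c /
        (marg₁ (coclust p CX CW) c.1 * marg₂ (coclust p CX CW) c.2))
      ≤ mutualInfoPos (coclust p CX CW') := by
  set Q := coclust p CX CW' with hQdef
  set P := coclust p CX CW with hPdef
  have hQ0 : ∀ c, 0 ≤ Q c := my_coclust_nonneg p hpos CX CW'
  have hP0 : ∀ c, 0 ≤ P c := my_coclust_nonneg p hpos CX CW
  have hm1eq : ∀ xs, marg₁ P xs = marg₁ Q xs := fun xs => by
    rw [hPdef, hQdef, my_marg₁_coclust_eq, my_marg₁_coclust_eq]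
  rw [show mutualInfoPos Q = ∑ c, Q c * Real.log (Q c / (marg₁ Q c.1 * marg₂ Q c.2)) from
    my_sum_filter_pos Q (fun c => Real.log (Q c / (marg₁ Q c.1 * marg₂ Q c.2))) hQ0]
  rw [← sub_nonneg, ← Finset.sum_sub_distrib]
  simp only [hm1eq]
  rw [Fintype.sum_prod_type_right]
  apply Finset.sum_nonneg
  intro ws _
  by_cases hmQ : 0 < marg₂ Q ws
  · obtain ⟨xs0, _, hxs0⟩ := Finset.exists_ne_zero_of_sum_ne_zero
      (show (∑ xs, Q (xs, ws)) ≠ 0 from hmQ.ne')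
    have hQxs0 : 0 < Q (xs0, ws) := lt_of_le_of_ne (hQ0 _) (Ne.symm hxs0)
    have hmP : 0 < marg₂ P ws :=
      Finset.sum_pos' (fun xs _ => hP0 (xs, ws)) ⟨xs0, Finset.mem_univ _, hQP _ hQxs0⟩
    have hg := my_gibbs (fun xs => Q (xs, ws) / marg₂ Q ws)
      (fun xs => P (xs, ws) / marg₂ P ws)
      (fun xs => div_nonneg (hQ0 _) hmQ.le)
      (fun xs => div_nonneg (hP0 _) hmP.le)
      (by rw [← Finset.sum_div]; exact div_self hmQ.ne')
      (le_of_eq (by rw [← Finset.sum_div]; exact div_self hmP.ne'))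
      (fun xs hax => by
        have hQc : 0 < Q (xs, ws) := by
          have := mul_pos hax hmQ
          rwa [div_mul_cancel₀ _ hmQ.ne'] at this
        exact div_pos (hQP _ hQc) hmP)
    have claim : ∀ xs, Q (xs, ws) * Real.log (Q (xs, ws) / (marg₁ Q xs * marg₂ Q ws))
        - Q (xs, ws) * Real.log (P (xs, ws) / (marg₁ Q xs * marg₂ P ws))
        = marg₂ Q ws * ((Q (xs, ws) / marg₂ Q ws) *
            Real.log ((Q (xs, ws) / marg₂ Q ws) / (P (xs, ws) / marg₂ P ws))) := by
      intro xs
      by_cases hQc : 0 < Q (xs, ws)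
      · have hPc := hQP _ hQc
        have hm1Q : 0 < marg₁ Q xs :=
          Finset.sum_pos' (fun ws' _ => hQ0 (xs, ws')) ⟨ws, Finset.mem_univ _, hQc⟩
        have e1 : Real.log (Q (xs, ws) / (marg₁ Q xs * marg₂ Q ws))
            = Real.log (Q (xs, ws)) - (Real.log (marg₁ Q xs) + Real.log (marg₂ Q ws)) := by
          rw [Real.log_div hQc.ne' (mul_pos hm1Q hmQ).ne', Real.log_mul hm1Q.ne' hmQ.ne']
        have e2 : Real.log (P (xs, ws) / (marg₁ Q xs * marg₂ P ws))
            = Real.log (P (xs, ws)) - (Real.log (marg₁ Q xs) + Real.log (marg₂ P ws)) := by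
          rw [Real.log_div hPc.ne' (mul_pos hm1Q hmP).ne', Real.log_mul hm1Q.ne' hmP.ne']
        have e4 : Real.log ((Q (xs, ws) / marg₂ Q ws) / (P (xs, ws) / marg₂ P ws))
            = (Real.log (Q (xs, ws)) - Real.log (marg₂ Q ws))
              - (Real.log (P (xs, ws)) - Real.log (marg₂ P ws)) := by
          rw [Real.log_div (div_pos hQc hmQ).ne' (div_pos hPc hmP).ne',
            Real.log_div hQc.ne' hmQ.ne', Real.log_div hPc.ne' hmP.ne']
        rw [e1, e2, e4]
        field_simp
        ring
      · have hQc0 : Q (xs, ws) = 0 := le_antisymm (not_lt.mp hQc) (hQ0 _)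
        rw [hQc0]
        simp
    rw [show (∑ xs, (Q (xs, ws) * Real.log (Q (xs, ws) / (marg₁ Q xs * marg₂ Q ws))
        - Q (xs, ws) * Real.log (P (xs, ws) / (marg₁ Q xs * marg₂ P ws))))
        = ∑ xs, marg₂ Q ws * ((Q (xs, ws) / marg₂ Q ws) *
            Real.log ((Q (xs, ws) / marg₂ Q ws) / (P (xs, ws) / marg₂ P ws))) from
      Finset.sum_congr rfl fun xs _ => claim xs]
    rw [← Finset.mul_sum]
    exact mul_nonneg hmQ.le hg
  · have hmQ0 : marg₂ Q ws = 0 :=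
      le_antisymm (not_lt.mp hmQ) (Finset.sum_nonneg fun xs _ => hQ0 (xs, ws))
    have hz : ∀ xs, Q (xs, ws) = 0 := fun xs =>
      (Finset.sum_eq_zero_iff_of_nonneg (fun x _ => hQ0 (x, ws))).mp hmQ0 xs (Finset.mem_univ xs)
    apply le_of_eq
    symm
    apply Finset.sum_eq_zero
    intro xs _
    rw [hz xs]
    ring

end helperlemmas2

/-- Column (feature) update monotonicity: if for every `w`,
`D(p(·|w) ‖ p̂(·|C_W' w)) ≤ D(p(·|w) ‖ p̂(·|C_W w))` (with `p̂` computed from the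
current pair `(C_X, C_W)`), then `ℓ_A(C_X, C_W') ≤ ℓ_A(C_X, C_W)`. -/
theorem col_update_monotone {X W Xs Ws : Type*} [Fintype X] [Fintype W] [Nonempty X] [Nonempty W]
    [Fintype Xs] [Fintype Ws] [DecidableEq Xs] [DecidableEq Ws]
    (p : X × W → ℝ) (hpos : ∀ c, 0 < p c) (hsum : ∑ c, p c = 1)
    (CX : X → Xs) (CW : W → Ws) (CW' : W → Ws)
    (hupd : ∀ w : W,
      KLdiv (condCol p w) (approxCondCol p CX CW (CW' w))
        ≤ KLdiv (condCol p w) (approxCondCol p CX CW (CW w))) :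
    lossA p CX CW' ≤ lossA p CX CW := by
  classical
  have hm1 := my_marg₁_pos p hpos
  have hm2 := my_marg₂_pos p hpos
  have hcond : ∀ w x, 0 < condCol p w x := fun w x => div_pos (hpos _) (hm2 w)
  have hold : ∀ w x, 0 < approxCondCol p CX CW (CW w) x := fun w x =>
    div_pos (mul_pos (my_coclust_apply_pos p hpos CX CW x w) (hm1 x))
      (mul_pos (my_marg₂_coclust_pos p hpos CX CW w) (my_marg₁_coclust_pos p hpos CX CW x))
  have key : ∀ w, (∀ x, 0 < approxCondCol p CX CW (CW' w) x) ∧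
      (∑ x, condCol p w x * Real.log (condCol p w x / approxCondCol p CX CW (CW' w) x))
        ≤ ∑ x, condCol p w x * Real.log (condCol p w x / approxCondCol p CX CW (CW w) x) := by
    intro w
    have hle := hupd w
    rw [my_KLdiv_of_pos (condCol p w) (approxCondCol p CX CW (CW w)) (hcond w) (hold w)] at hle
    have hnotex : ¬∃ x, 0 < condCol p w x ∧ approxCondCol p CX CW (CW' w) x = 0 := by
      intro hex
      rw [KLdiv, if_pos hex] at hle
      exact absurd hle (not_le.mpr (EReal.coe_lt_top _))
    push_neg at hnotex
    have hpos' : ∀ x, 0 < approxCondCol p CX CW (CW' w) x := fun x =>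
      lt_of_le_of_ne (my_approxCondCol_nonneg p hpos CX CW _ x)
        (Ne.symm (hnotex x (hcond w x)))
    refine ⟨hpos', ?_⟩
    rw [my_KLdiv_of_pos _ _ (hcond w) hpos'] at hle
    exact_mod_cast hle
  have hCident := my_sum_weighted_KL p hpos CX CW CW hold
  have hC'ident := my_sum_weighted_KL p hpos CX CW CW' (fun w => (key w).1)
  have hstep : (∑ w, marg₂ p w * ∑ x, condCol p w x *
        Real.log (condCol p w x / approxCondCol p CX CW (CW' w) x))
      ≤ ∑ w, marg₂ p w * ∑ x, condCol p w x *
        Real.log (condCol p w x / approxCondCol p CX CW (CW w) x) :=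
    Finset.sum_le_sum fun w _ => mul_le_mul_of_nonneg_left (key w).2 (hm2 w).le
  have hTold : (∑ c, coclust p CX CW c * Real.log (coclust p CX CW c /
        (marg₁ (coclust p CX CW) c.1 * marg₂ (coclust p CX CW) c.2)))
      = mutualInfoPos (coclust p CX CW) :=
    (my_sum_filter_pos (coclust p CX CW)
      (fun c => Real.log (coclust p CX CW c /
        (marg₁ (coclust p CX CW) c.1 * marg₂ (coclust p CX CW) c.2)))
      (my_coclust_nonneg p hpos CX CW)).symm
  have hQP : ∀ c, 0 < coclust p CX CW' c → 0 < coclust p CX CW c := by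
    intro c hc
    obtain ⟨xs, ws⟩ := c
    obtain ⟨x, hx, hxne⟩ := Finset.exists_ne_zero_of_sum_ne_zero hc.ne'
    obtain ⟨w, hw, hwne⟩ := Finset.exists_ne_zero_of_sum_ne_zero hxne
    simp only [Finset.mem_filter] at hx hw
    have h := (my_approx_pos_components p hpos CX CW (CW' w) x ((key w).1 x)).1
    rwa [hx.2, hw.2] at h
  have hT'le := my_T_le p hpos CX CW CW' hQP
  rw [lossA, lossA]
  linarith [hCident, hC'ident, hstep, hTold, hT'le]
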